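/- With Z_k the supermartingale of conditional minimax values and Z'_k the analogously defined submartingale (max over σ(X_{−k}^{−1})-measurable λ of the conditional expectation of the inner min), both Z_k and Z'_k converge almost surely and in L¹ to Z∞ = E[l(y*∞, λ*∞, X_0) | F_{−∞}^{−1}], and hence E[Z_k] → V* and E[Z'_k] → V* where V* = E[Z∞]. -/

import Mathlib

set_option maxHeartbeats 1000000

open MeasureTheory Filter Topology

/-- The σ-algebra generated by the infinite past `…, X₋₂, X₋₁`. -/
def pastSigmaAll {Ω X : Type*} [MeasurableSpace X] (Xp : ℤ → Ω → X) : MeasurableSpace Ω :=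
  ⨆ i : {i : ℤ // i < 0}, MeasurableSpace.comap (Xp i.1) inferInstance

/-- The σ-algebra generated by the `k`-step past `X₋ₖ, …, X₋₁`. -/
def pastSigmaK {Ω X : Type*} [MeasurableSpace X] (Xp : ℤ → Ω → X) (k : ℕ) :
    MeasurableSpace Ω :=
  ⨆ i : {i : ℤ // -(k : ℤ) ≤ i ∧ i < 0}, MeasurableSpace.comap (Xp i.1) inferInstance

/-- The supermartingale `Z_k` of conditional minimax values and the submartingale `Z'_k`
of conditional maximin values both converge, almost surely and in `L¹`, to
`Z∞ = E[l(y*∞, λ*∞, X₀) | F₋∞]`, and their expectations converge to `V* = E[Z∞]`. -/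

private lemma clamp_mem {a b r : ℝ} (hr : 0 ≤ r) :
    |max (a - r) (min (a + r) b) - a| ≤ r := by
  rw [abs_le]
  constructor
  · have := le_max_left (a - r) (min (a + r) b); linarith
  · have : max (a - r) (min (a + r) b) ≤ a + r :=
      max_le (by linarith) (min_le_left _ _)
    linarith

private lemma clamp_eq {a b r : ℝ} (h : |b - a| ≤ r) :
    max (a - r) (min (a + r) b) = b := by
  rw [abs_le] at h
  rw [min_eq_right (by linarith), max_eq_right (by linarith)]

/-- If `g` can be uniformly approximated by functions having `m`-measurable a.e. versions,
then `g` has an `m`-measurable a.e. version. -/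
lemma exists_meas_of_approx {Ω : Type*} {m m0 : MeasurableSpace Ω} (μ : @Measure Ω m0)
    (g : Ω → ℝ)
    (H : ∀ n : ℕ, ∃ gn Gn : Ω → ℝ, Measurable[m] Gn ∧ gn =ᵐ[μ] Gn ∧
      ∀ ω, |gn ω - g ω| ≤ (2:ℝ)⁻¹ ^ n) :
    ∃ G : Ω → ℝ, Measurable[m] G ∧ g =ᵐ[μ] G := by
  choose gn Gn hGnm hae hb using H
  set G' : ℕ → Ω → ℝ := fun n => Nat.rec (Gn 0) (fun n ih ω =>
    max (ih ω - 3 * (2:ℝ)⁻¹ ^ (n+1)) (min (ih ω + 3 * (2:ℝ)⁻¹ ^ (n+1)) (Gn (n+1) ω))) n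
    with hG'def
  have hG'succ : ∀ n ω, G' (n+1) ω =
      max (G' n ω - 3 * (2:ℝ)⁻¹ ^ (n+1)) (min (G' n ω + 3 * (2:ℝ)⁻¹ ^ (n+1)) (Gn (n+1) ω)) :=
    fun n ω => rfl
  have hG'm : ∀ n, Measurable[m] (G' n) := by
    intro n
    induction n with
    | zero => exact hGnm 0
    | succ n ih =>
        exact Measurable.max (ih.sub measurable_const)
          (Measurable.min (ih.add measurable_const) (hGnm (n+1)))
  have hdist : ∀ n ω, dist (G' n ω) (G' (n+1) ω) ≤ (3/2) * (2:ℝ)⁻¹ ^ n := by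
    intro n ω
    rw [dist_comm, Real.dist_eq, hG'succ]
    have h := clamp_mem (a := G' n ω) (b := Gn (n+1) ω) (r := 3 * (2:ℝ)⁻¹ ^ (n+1))
      (by positivity)
    calc _ ≤ 3 * (2:ℝ)⁻¹ ^ (n+1) := h
    _ = (3/2) * (2:ℝ)⁻¹ ^ n := by ring
  have hcau : ∀ ω, CauchySeq (fun n => G' n ω) := fun ω =>
    cauchySeq_of_le_geometric (2:ℝ)⁻¹ (3/2) (by norm_num) (fun n => hdist n ω)
  set G : Ω → ℝ := fun ω => limUnder atTop (fun n => G' n ω) with hGdef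
  have htend : ∀ ω, Tendsto (fun n => G' n ω) atTop (𝓝 (G ω)) := fun ω =>
    (hcau ω).tendsto_limUnder
  refine ⟨G, ?_, ?_⟩
  · exact @measurable_of_tendsto_metrizable Ω ℝ m _ _ _ _ G' G hG'm (tendsto_pi_nhds.2 htend)
  · have hS : ∀ᵐ ω ∂μ, ∀ n, gn n ω = Gn n ω := ae_all_iff.2 hae
    filter_upwards [hS] with ω hω
    have heq : ∀ n, G' n ω = gn n ω := by
      intro n
      induction n with
      | zero => exact (hω 0).symm
      | succ n ih =>
          rw [hG'succ, ih, ← hω (n+1)]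
          refine clamp_eq ?_
          have h1 := hb (n+1) ω
          have h2 := hb n ω
          calc |gn (n+1) ω - gn n ω| ≤ |gn (n+1) ω - g ω| + |g ω - gn n ω| := abs_sub_le _ _ _
          _ ≤ (2:ℝ)⁻¹ ^ (n+1) + (2:ℝ)⁻¹ ^ n := by
              rw [abs_sub_comm (g ω)]; exact add_le_add h1 h2
          _ ≤ 3 * (2:ℝ)⁻¹ ^ (n+1) := by ring_nf; nlinarith [pow_pos (by norm_num : (0:ℝ) < 2⁻¹) n]
    have htog : Tendsto (fun n => G' n ω) atTop (𝓝 (g ω)) := by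
      simp only [heq]
      rw [tendsto_iff_dist_tendsto_zero]
      refine squeeze_zero (fun n => dist_nonneg) (fun n => ?_)
        (tendsto_pow_atTop_nhds_zero_of_lt_one (r := (2:ℝ)⁻¹) (by norm_num) (by norm_num))
      rw [Real.dist_eq]; exact hb n ω
    exact tendsto_nhds_unique htog (htend ω)

section NetMap

variable {W : Type*} [MetricSpace W] [MeasurableSpace W] [OpensMeasurableSpace W] [Nonempty W]

/-- Map a point to the first element of `L` at distance `< δ`, if any. -/
noncomputable def netMap (δ : ℝ) : List W → W → W
  | [], _ => Classical.arbitrary W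
  | a :: l, w => if dist w a < δ then a else netMap δ l w

lemma netMap_spec {δ : ℝ} : ∀ (L : List W) (w : W), (∃ p ∈ L, dist w p < δ) →
    netMap δ L w ∈ L ∧ dist w (netMap δ L w) < δ := by
  intro L
  induction L with
  | nil => intro w h; simp at h
  | cons a l ih =>
      intro w h
      by_cases hd : dist w a < δ
      · simp [netMap, hd]
      · obtain ⟨p, hp, hdp⟩ := h
        rcases List.mem_cons.1 hp with rfl | hp
        · exact absurd hdp hd
        · have h2 := ih w ⟨p, hp, hdp⟩
          refine ⟨?_, ?_⟩
          · simp only [netMap, if_neg hd]; exact List.mem_cons_of_mem _ h2.1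
          · simpa only [netMap, if_neg hd] using h2.2

lemma measurable_netMap {δ : ℝ} : ∀ L : List W, Measurable (netMap δ L) := by
  intro L
  induction L with
  | nil => exact measurable_const
  | cons a l ih =>
      refine Measurable.ite ?_ measurable_const ih
      exact measurableSet_ball

end NetMap

section PickFn

variable {Ω W : Type*} [Nonempty W]

/-- Pick the first `p` in the list whose associated function exceeds `1/2` at `ω`. -/
noncomputable def pickFn (d : W) : List (W × (Ω → ℝ)) → Ω → W
  | [], _ => d
  | e :: l, ω => if 1/2 < e.2 ω then e.1 else pickFn d l ω

lemma measurable_pickFn {m : MeasurableSpace Ω} [MeasurableSpace W]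
    [MeasurableSingletonClass W] (d : W) :
    ∀ (fs : List (W × (Ω → ℝ))), (∀ e ∈ fs, Measurable[m] e.2) →
      Measurable[m] (pickFn d fs) := by
  intro fs
  induction fs with
  | nil => exact fun _ => measurable_const
  | cons e l ih =>
      intro h
      refine Measurable.ite ?_ measurable_const (ih fun e' he' => h e' (List.mem_cons_of_mem _ he'))
      exact measurableSet_lt measurable_const (h e (List.mem_cons_self))

lemma pickFn_mem {d : W} : ∀ {fs : List (W × (Ω → ℝ))} {ω : Ω},
    pickFn d fs ω = d ∨ ∃ e ∈ fs, pickFn d fs ω = e.1 := by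
  intro fs
  induction fs with
  | nil => intro ω; exact Or.inl rfl
  | cons e l ih =>
      intro ω
      by_cases hd : 1/2 < e.2 ω
      · exact Or.inr ⟨e, List.mem_cons_self, by simp only [pickFn, if_pos hd]⟩
      · rcases @ih ω with h | ⟨e', he', h⟩
        · exact Or.inl (by simpa only [pickFn, if_neg hd] using h)
        · exact Or.inr ⟨e', List.mem_cons_of_mem _ he', by simpa only [pickFn, if_neg hd] using h⟩

lemma pickFn_eq {d p : W} : ∀ {fs : List (W × (Ω → ℝ))} {ω : Ω},
    (∃ h, (p, h) ∈ fs ∧ 1/2 < h ω) → (∀ e ∈ fs, e.1 ≠ p → ¬ (1/2 < e.2 ω)) →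
    pickFn d fs ω = p := by
  intro fs
  induction fs with
  | nil => rintro ω ⟨h, hmem, _⟩ _; simp at hmem
  | cons e l ih =>
      rintro ω ⟨h, hmem, hgt⟩ hother
      by_cases hd : 1/2 < e.2 ω
      · simp only [pickFn, if_pos hd]
        by_contra hne
        exact hother e (List.mem_cons_self) hne hd
      · simp only [pickFn, if_neg hd]
        rcases List.mem_cons.1 hmem with heq | hmem'
        · exfalso; rw [← heq] at hd; exact hd hgt
        · exact ih ⟨h, hmem', hgt⟩ (fun e' he' => hother e' (List.mem_cons_of_mem _ he'))

end PickFn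

/-- A finite-range composition of functions with `m`-measurable a.e. versions has an
`m`-measurable a.e. version. -/
lemma exists_meas_comp {Ω W : Type*} {m m0 : MeasurableSpace Ω} [MeasurableSpace W]
    [MeasurableSingletonClass W]
    (μ : @MeasureTheory.Measure Ω m0) (s : Finset W) (c : Ω → W) (hc : Measurable[m] c)
    (hcs : ∀ ω, c ω ∈ s) (f : W → Ω → ℝ)
    (hf : ∀ p ∈ s, ∃ h : Ω → ℝ, Measurable[m] h ∧ (fun ω => f p ω) =ᵐ[μ] h) :
    ∃ H : Ω → ℝ, Measurable[m] H ∧ (fun ω => f (c ω) ω) =ᵐ[μ] H := by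
  classical
  have hf' : ∀ p : W, ∃ h : Ω → ℝ, Measurable[m] h ∧ (p ∈ s → (fun ω => f p ω) =ᵐ[μ] h) := by
    intro p
    by_cases hp : p ∈ s
    · obtain ⟨h, hm, hae⟩ := hf p hp; exact ⟨h, hm, fun _ => hae⟩
    · exact ⟨fun _ => 0, measurable_const, fun h => absurd h hp⟩
  choose h hm hae using hf'
  refine ⟨fun ω => ∑ p ∈ s, if c ω = p then h p ω else 0, ?_, ?_⟩
  · refine Finset.measurable_sum _ fun p _ => ?_
    exact Measurable.ite (hc (measurableSet_singleton p)) (hm p) measurable_const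
  · have hball : ∀ᵐ ω ∂μ, ∀ p ∈ s, f p ω = h p ω :=
      (MeasureTheory.ae_ball_iff s.countable_toSet).2 fun p hp => hae p hp
    filter_upwards [hball] with ω hω
    rw [Finset.sum_ite_eq s (c ω) (fun p => h p ω), if_pos (hcs ω)]
    exact hω (c ω) (hcs ω)

/-- A finite `sup'` of functions with `m`-measurable a.e. versions has an
`m`-measurable a.e. version. -/
lemma exists_meas_sup' {Ω W : Type*} {m m0 : MeasurableSpace Ω}
    (μ : @MeasureTheory.Measure Ω m0) (s : Finset W) (hs : s.Nonempty) (f : W → Ω → ℝ)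
    (hf : ∀ p ∈ s, ∃ h : Ω → ℝ, Measurable[m] h ∧ (fun ω => f p ω) =ᵐ[μ] h) :
    ∃ H : Ω → ℝ, Measurable[m] H ∧ (fun ω => s.sup' hs (fun p => f p ω)) =ᵐ[μ] H := by
  classical
  have hf' : ∀ p : W, ∃ h : Ω → ℝ, Measurable[m] h ∧ (p ∈ s → (fun ω => f p ω) =ᵐ[μ] h) := by
    intro p
    by_cases hp : p ∈ s
    · obtain ⟨h, hm, hae⟩ := hf p hp; exact ⟨h, hm, fun _ => hae⟩
    · exact ⟨fun _ => 0, measurable_const, fun h => absurd h hp⟩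
  choose h hm hae using hf'
  refine ⟨fun ω => s.sup' hs (fun p => h p ω), ?_, ?_⟩
  · have hmeas : Measurable[m] (s.sup' hs h) := by
      letI : MeasurableSpace Ω := m
      exact Finset.measurable_sup' hs fun p _ => hm p
    have heq : (fun ω => s.sup' hs (fun p => h p ω)) = s.sup' hs h := by
      funext ω; exact (Finset.sup'_apply hs h ω).symm
    rw [heq]; exact hmeas
  · have hball : ∀ᵐ ω ∂μ, ∀ p ∈ s, f p ω = h p ω :=
      (MeasureTheory.ae_ball_iff s.countable_toSet).2 fun p hp => hae p hp
    filter_upwards [hball] with ω hω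
    exact Finset.sup'_congr hs rfl fun p hp => hω p hp

section Master

open MeasureTheory Filter Topology

variable {Ω X Y Λ : Type*}

lemma master_tendsto [m0 : MeasurableSpace Ω]
    [MetricSpace X] [CompactSpace X] [MeasurableSpace X] [BorelSpace X]
    [MetricSpace Y] [CompactSpace Y] [Nonempty Y] [MeasurableSpace Y] [BorelSpace Y]
    [MetricSpace Λ] [CompactSpace Λ] [Nonempty Λ] [MeasurableSpace Λ] [BorelSpace Λ]
    (μ : Measure Ω) [IsProbabilityMeasure μ]
    (Xp : ℤ → Ω → X) (hXm : ∀ i, Measurable (Xp i))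
    (l : Y → Λ → X → ℝ)
    (hl : Continuous fun p : Y × Λ × X => l p.1 p.2.1 p.2.2)
    (Pinf : Ω → ProbabilityMeasure X)
    (hPinf : ∀ f : X → ℝ, Continuous f →
      (fun ω => ∫ x, f x ∂(Pinf ω : Measure X))
        =ᵐ[μ] μ[(fun ω => f (Xp 0 ω)) | pastSigmaAll Xp])
    (Z : ℕ → Ω → ℝ)
    (hZle : ∀ k, ∀ y : Ω → Y, Measurable[pastSigmaK Xp k] y →
      Z k ≤ᵐ[μ] μ[(fun ω => ⨆ lam : Λ, ∫ x, l (y ω) lam x ∂(Pinf ω : Measure X))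
        | pastSigmaK Xp k])
    (hZatt : ∀ k, ∃ y : Ω → Y, Measurable[pastSigmaK Xp k] y ∧
      Z k =ᵐ[μ] μ[(fun ω => ⨆ lam : Λ, ∫ x, l (y ω) lam x ∂(Pinf ω : Measure X))
        | pastSigmaK Xp k])
    (ystar : Ω → Y) (lamstar : Ω → Λ)
    (hystarm : Measurable[pastSigmaAll Xp] ystar)
    (hlamstarm : Measurable[pastSigmaAll Xp] lamstar)
    (hsaddle : ∀ᵐ ω ∂μ, ∀ (y : Y) (lam : Λ),
      (∫ x, l (ystar ω) lam x ∂(Pinf ω : Measure X))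
          ≤ (∫ x, l (ystar ω) (lamstar ω) x ∂(Pinf ω : Measure X)) ∧
        (∫ x, l (ystar ω) (lamstar ω) x ∂(Pinf ω : Measure X))
          ≤ ∫ x, l y (lamstar ω) x ∂(Pinf ω : Measure X)) :
    ∃ C : ℝ, 0 ≤ C ∧
      AEStronglyMeasurable (fun ω => ∫ x, l (ystar ω) (lamstar ω) x ∂(Pinf ω : Measure X)) μ ∧
      (∀ ω, |∫ x, l (ystar ω) (lamstar ω) x ∂(Pinf ω : Measure X)| ≤ C) ∧
      (∀ k, ∀ᵐ ω ∂μ, |Z k ω| ≤ C) ∧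
      (∀ᵐ ω ∂μ, Tendsto (fun k => Z k ω) atTop
        (𝓝 (∫ x, l (ystar ω) (lamstar ω) x ∂(Pinf ω : Measure X)))) := by
  classical
  -- notation
  set F : Ω → Y × Λ → ℝ := fun ω p => ∫ x, l p.1 p.2 x ∂(Pinf ω : Measure X) with hFdef
  set g : Ω → ℝ := fun ω => F ω (ystar ω, lamstar ω) with hgdef
  -- the σ-algebras
  have hkle : ∀ k, pastSigmaK Xp k ≤ m0 := fun k =>
    iSup_le fun i => (hXm i.1).comap_le
  have hinfle : pastSigmaAll Xp ≤ m0 := iSup_le fun i => (hXm i.1).comap_le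
  have hmono : Monotone (pastSigmaK Xp) := by
    intro k k' hkk'
    refine iSup_le fun i => ?_
    have h1 : -(k' : ℤ) ≤ i.1 := by
      have : -(k' : ℤ) ≤ -(k : ℤ) := by exact_mod_cast neg_le_neg (by exact_mod_cast hkk')
      exact this.trans i.2.1
    exact le_iSup_of_le ⟨i.1, h1, i.2.2⟩ le_rfl
  set ℱ : Filtration ℕ m0 := ⟨fun k => pastSigmaK Xp k, hmono, hkle⟩ with hℱdef
  have hℱk : ∀ k, ℱ k = pastSigmaK Xp k := fun k => rfl
  have hsup : (⨆ k, pastSigmaK Xp k) = pastSigmaAll Xp := by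
    apply le_antisymm
    · exact iSup_le fun k => iSup_le fun i => le_iSup_of_le ⟨i.1, i.2.2⟩ le_rfl
    · refine iSup_le fun i => ?_
      refine le_iSup_of_le (-i.1).toNat (le_iSup_of_le ⟨i.1, ?_, i.2⟩ le_rfl)
      rw [Int.toNat_of_nonneg (by omega)]; omega
  -- the uniform bound
  obtain ⟨C0, hC0⟩ : ∃ C0 : ℝ, ∀ z ∈ Set.range (fun p : Y × Λ × X => l p.1 p.2.1 p.2.2),
      ‖z‖ ≤ C0 := (isCompact_range hl).isBounded.exists_norm_le
  set C : ℝ := max C0 0 with hCdef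
  have hCnn : 0 ≤ C := le_max_right _ _
  have hlC : ∀ y lam x, |l y lam x| ≤ C := fun y lam x =>
    le_trans (hC0 _ ⟨(y, lam, x), rfl⟩) (le_max_left _ _)
  -- integrability in x
  have hlcont : ∀ (y : Y) (lam : Λ), Continuous (fun x => l y lam x) := fun y lam =>
    hl.comp (continuous_const.prodMk (continuous_const.prodMk continuous_id))
  have hxint : ∀ (ω : Ω) (y : Y) (lam : Λ), Integrable (fun x => l y lam x) (Pinf ω : Measure X) :=
    fun ω y lam => (hlcont y lam).integrable_of_hasCompactSupport
      (IsCompact.of_isClosed_subset isCompact_univ (isClosed_tsupport _) (Set.subset_univ _))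
  have hFbdd : ∀ ω p, |F ω p| ≤ C := by
    intro ω p
    rw [← Real.norm_eq_abs]
    calc ‖F ω p‖ ≤ C * ((Pinf ω : Measure X) Set.univ).toReal :=
      norm_integral_le_of_norm_le_const (ae_of_all _ fun x => by
        rw [Real.norm_eq_abs]; exact hlC _ _ _)
    _ = C := by simp
  -- modulus of continuity
  have hmod : ∀ ε : ℝ, 0 < ε → ∃ δ : ℝ, 0 < δ ∧ ∀ p q : Y × Λ, dist p q < δ →
      ∀ ω, |F ω p - F ω q| ≤ ε := by
    intro ε hε
    have hu : UniformContinuous (fun r : (Y × Λ) × X => l r.1.1 r.1.2 r.2) :=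
      CompactSpace.uniformContinuous_of_continuous
        (hl.comp ((continuous_fst.fst).prodMk ((continuous_fst.snd).prodMk continuous_snd)))
    obtain ⟨δ, hδ, hδ'⟩ := Metric.uniformContinuous_iff.1 hu ε hε
    refine ⟨δ, hδ, fun p q hpq ω => ?_⟩
    have hptw : ∀ x : X, |l p.1 p.2 x - l q.1 q.2 x| ≤ ε := by
      intro x
      have : dist ((p, x) : (Y × Λ) × X) ((q, x) : (Y × Λ) × X) < δ := by
        rw [Prod.dist_eq]; simp only [dist_self, max_lt_iff]; exact ⟨hpq, hδ⟩
      have := hδ' this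
      rw [Real.dist_eq] at this
      exact this.le
    have : F ω p - F ω q = ∫ x, (l p.1 p.2 x - l q.1 q.2 x) ∂(Pinf ω : Measure X) :=
      (integral_sub (hxint ω p.1 p.2) (hxint ω q.1 q.2)).symm
    rw [this, ← Real.norm_eq_abs]
    calc ‖∫ x, (l p.1 p.2 x - l q.1 q.2 x) ∂(Pinf ω : Measure X)‖
        ≤ ε * ((Pinf ω : Measure X) Set.univ).toReal :=
      norm_integral_le_of_norm_le_const (ae_of_all _ fun x => by
        rw [Real.norm_eq_abs]; exact hptw x)
    _ = ε := by simp
  -- pointwise measurable versions of F · p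
  have hFp : ∀ p : Y × Λ, ∃ h : Ω → ℝ, Measurable[pastSigmaAll Xp] h ∧
      (fun ω => F ω p) =ᵐ[μ] h := by
    intro p
    refine ⟨μ[(fun ω => l p.1 p.2 (Xp 0 ω)) | pastSigmaAll Xp], ?_, ?_⟩
    · exact stronglyMeasurable_condExp.measurable
    · exact hPinf (fun x => l p.1 p.2 x) (hlcont p.1 p.2)
  -- the inner sup
  set Φ : Ω → Y → ℝ := fun ω y => ⨆ lam : Λ, F ω (y, lam) with hΦdef
  have hΦbddAbove : ∀ ω y, BddAbove (Set.range fun lam => F ω (y, lam)) := fun ω y =>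
    ⟨C, fun z ⟨lam, hlam⟩ => hlam ▸ (abs_le.1 (hFbdd ω (y, lam))).2⟩
  have hΦbdd : ∀ ω y, |Φ ω y| ≤ C := by
    intro ω y
    rw [abs_le]
    constructor
    · exact le_trans (neg_le_neg (le_refl C)) (le_trans (abs_le.1 (hFbdd ω (y, Classical.arbitrary Λ))).1
        (le_ciSup (hΦbddAbove ω y) (Classical.arbitrary Λ)))
    · exact ciSup_le fun lam => (abs_le.1 (hFbdd ω (y, lam))).2
  have hΦmod : ∀ ε : ℝ, 0 < ε → ∃ δ : ℝ, 0 < δ ∧ ∀ y y' : Y, dist y y' < δ →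
      ∀ ω, |Φ ω y - Φ ω y'| ≤ ε := by
    intro ε hε
    obtain ⟨δ, hδ, hδ'⟩ := hmod ε hε
    refine ⟨δ, hδ, fun y y' hyy' ω => ?_⟩
    have key : ∀ y₁ y₂ : Y, dist y₁ y₂ < δ → Φ ω y₁ ≤ Φ ω y₂ + ε := by
      intro y₁ y₂ h12
      refine ciSup_le fun lam => ?_
      have h1 : dist ((y₁, lam) : Y × Λ) ((y₂, lam) : Y × Λ) < δ := by
        rw [Prod.dist_eq]; simp only [dist_self, max_lt_iff]; exact ⟨h12, hδ⟩
      have := (abs_le.1 (hδ' _ _ h1 ω)).2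
      have h2 : F ω (y₁, lam) ≤ F ω (y₂, lam) + ε := by linarith
      exact h2.trans (add_le_add_left (le_ciSup (hΦbddAbove ω y₂) lam) ε)
    rw [abs_le]
    constructor
    · have := key y' y (by rwa [dist_comm]); linarith
    · have := key y y' hyy'; linarith
  -- measurable versions of Φ · p for fixed p
  have hΦp : ∀ p : Y, ∃ h : Ω → ℝ, Measurable[pastSigmaAll Xp] h ∧
      (fun ω => Φ ω p) =ᵐ[μ] h := by
    intro p
    apply exists_meas_of_approx μ
    intro n
    have hεn : (0:ℝ) < (2:ℝ)⁻¹ ^ n := by positivity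
    obtain ⟨δ, hδ, hδ'⟩ := hmod _ hεn
    obtain ⟨t, -, htfin, htcov⟩ :=
      finite_cover_balls_of_compact (isCompact_univ (X := Λ)) hδ
    have htcov' : ∀ lam : Λ, ∃ q ∈ htfin.toFinset, dist lam q < δ := by
      intro lam
      obtain ⟨q, hq, hlam⟩ := Set.mem_iUnion₂.1 (htcov (Set.mem_univ lam))
      exact ⟨q, htfin.mem_toFinset.2 hq, by simpa [Metric.mem_ball] using hlam⟩
    have htne : (htfin.toFinset).Nonempty := by
      obtain ⟨q, hq, -⟩ := htcov' (Classical.arbitrary Λ)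
      exact ⟨q, hq⟩
    obtain ⟨H, hHm, hHae⟩ := exists_meas_sup' μ htfin.toFinset htne
      (fun q ω => F ω (p, q)) (fun q _ => hFp (p, q))
    refine ⟨fun ω => (htfin.toFinset).sup' htne (fun q => F ω (p, q)), H, hHm, hHae, ?_⟩
    intro ω
    rw [abs_le]
    constructor
    · -- sup' ≥ Φ - ε
      have : Φ ω p ≤ (htfin.toFinset).sup' htne (fun q => F ω (p, q)) + (2:ℝ)⁻¹ ^ n := by
        refine ciSup_le fun lam => ?_
        obtain ⟨q, hq, hdq⟩ := htcov' lam
        have hd : dist ((p, lam) : Y × Λ) ((p, q) : Y × Λ) < δ := by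
          rw [Prod.dist_eq]; simp only [dist_self, max_lt_iff]; exact ⟨hδ, hdq⟩
        have h1 := (abs_le.1 (hδ' _ _ hd ω)).2
        have h2 : F ω (p, q) ≤ (htfin.toFinset).sup' htne (fun q => F ω (p, q)) :=
          Finset.le_sup' (fun q => F ω (p, q)) hq
        linarith
      linarith
    · -- sup' ≤ Φ
      have : (htfin.toFinset).sup' htne (fun q => F ω (p, q)) ≤ Φ ω p :=
        Finset.sup'_le _ _ fun q _ => le_ciSup (hΦbddAbove ω p) q
      linarith
  -- a.e. version of composite with measurable selection
  have hΦcomp : ∀ yk : Ω → Y, Measurable yk →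
      ∃ H : Ω → ℝ, Measurable H ∧ (fun ω => Φ ω (yk ω)) =ᵐ[μ] H := by
    intro yk hyk
    apply exists_meas_of_approx (m := m0) μ
    intro n
    have hεn : (0:ℝ) < (2:ℝ)⁻¹ ^ n := by positivity
    obtain ⟨δ, hδ, hδ'⟩ := hΦmod _ hεn
    obtain ⟨t, -, htfin, htcov⟩ :=
      finite_cover_balls_of_compact (isCompact_univ (X := Y)) hδ
    have htcov' : ∀ y : Y, ∃ q ∈ htfin.toFinset.toList, dist y q < δ := by
      intro y
      obtain ⟨q, hq, hy⟩ := Set.mem_iUnion₂.1 (htcov (Set.mem_univ y))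
      exact ⟨q, Finset.mem_toList.2 (htfin.mem_toFinset.2 hq), by simpa [Metric.mem_ball] using hy⟩
    set c : Ω → Y := fun ω => netMap δ htfin.toFinset.toList (yk ω) with hcdef
    have hcmem : ∀ ω, c ω ∈ htfin.toFinset := fun ω =>
      Finset.mem_toList.1 (netMap_spec _ _ (htcov' (yk ω))).1
    have hcdist : ∀ ω, dist (yk ω) (c ω) < δ := fun ω =>
      (netMap_spec _ _ (htcov' (yk ω))).2
    obtain ⟨H, hHm, hHae⟩ := exists_meas_comp (m := m0) μ htfin.toFinset c
      ((measurable_netMap _).comp hyk) hcmem (fun p ω => Φ ω p)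
      (fun p _ => ⟨(hΦp p).choose, (hΦp p).choose_spec.1.mono hinfle le_rfl,
        (hΦp p).choose_spec.2⟩)
    refine ⟨fun ω => Φ ω (c ω), H, hHm, hHae, fun ω => ?_⟩
    rw [abs_sub_comm]
    exact hδ' _ _ (hcdist ω) ω
  have hΦcomp_int : ∀ yk : Ω → Y, Measurable yk → Integrable (fun ω => Φ ω (yk ω)) μ := by
    intro yk hyk
    obtain ⟨H, hHm, hHae⟩ := hΦcomp yk hyk
    refine ⟨⟨H, hHm.stronglyMeasurable, hHae⟩, ?_⟩
    exact MeasureTheory.HasFiniteIntegral.of_bounded (C := C)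
      (ae_of_all _ fun ω => by rw [Real.norm_eq_abs]; exact hΦbdd ω (yk ω))
  -- measurable version of g
  have hgmeas : ∃ G : Ω → ℝ, Measurable[pastSigmaAll Xp] G ∧ g =ᵐ[μ] G := by
    apply exists_meas_of_approx μ
    intro n
    have hεn : (0:ℝ) < (2:ℝ)⁻¹ ^ n := by positivity
    obtain ⟨δ, hδ, hδ'⟩ := hmod _ hεn
    obtain ⟨t, -, htfin, htcov⟩ :=
      finite_cover_balls_of_compact (isCompact_univ (X := Y × Λ)) hδ
    have htcov' : ∀ w : Y × Λ, ∃ q ∈ htfin.toFinset.toList, dist w q < δ := by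
      intro w
      obtain ⟨q, hq, hw⟩ := Set.mem_iUnion₂.1 (htcov (Set.mem_univ w))
      exact ⟨q, Finset.mem_toList.2 (htfin.mem_toFinset.2 hq), by simpa [Metric.mem_ball] using hw⟩
    set w : Ω → Y × Λ := fun ω => (ystar ω, lamstar ω) with hwdef
    have hwm : Measurable[pastSigmaAll Xp] w := hystarm.prodMk hlamstarm
    set c : Ω → Y × Λ := fun ω => netMap δ htfin.toFinset.toList (w ω) with hcdef
    have hcmem : ∀ ω, c ω ∈ htfin.toFinset := fun ω =>
      Finset.mem_toList.1 (netMap_spec _ _ (htcov' (w ω))).1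
    have hcdist : ∀ ω, dist (w ω) (c ω) < δ := fun ω =>
      (netMap_spec _ _ (htcov' (w ω))).2
    obtain ⟨H, hHm, hHae⟩ := exists_meas_comp (m := pastSigmaAll Xp) μ htfin.toFinset c
      ((measurable_netMap _).comp hwm) hcmem (fun p ω => F ω p)
      (fun p _ => hFp p)
    refine ⟨fun ω => F ω (c ω), H, hHm, hHae, fun ω => ?_⟩
    rw [abs_sub_comm]
    exact hδ' _ _ (hcdist ω) ω
  obtain ⟨G, hGm, hGae⟩ := hgmeas
  have hgbdd : ∀ ω, |g ω| ≤ C := fun ω => hFbdd ω _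
  have hg_aesm : AEStronglyMeasurable g μ :=
    ⟨G, (hGm.mono hinfle le_rfl).stronglyMeasurable, hGae⟩
  have hg_int : Integrable g μ :=
    ⟨hg_aesm, MeasureTheory.HasFiniteIntegral.of_bounded (C := C)
      (ae_of_all _ fun ω => by rw [Real.norm_eq_abs]; exact hgbdd ω)⟩
  -- saddle point consequences
  have hgsup : ∀ᵐ ω ∂μ, Φ ω (ystar ω) = g ω := by
    filter_upwards [hsaddle] with ω hω
    refine le_antisymm (ciSup_le fun lam => (hω (ystar ω) lam).1) ?_
    exact le_ciSup (hΦbddAbove ω (ystar ω)) (lamstar ω)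
  have hg_le_Φ : ∀ᵐ ω ∂μ, ∀ y : Y, g ω ≤ Φ ω y := by
    filter_upwards [hsaddle] with ω hω y
    exact le_trans (hω y (lamstar ω)).2 (le_ciSup (hΦbddAbove ω y) (lamstar ω))
  -- lower bound
  have hlower : ∀ k : ℕ, μ[g | pastSigmaK Xp k] ≤ᵐ[μ] Z k := by
    intro k
    obtain ⟨y, hym, hyeq⟩ := hZatt k
    have hyint : Integrable (fun ω => Φ ω (y ω)) μ :=
      hΦcomp_int y (hym.mono (hkle k) le_rfl)
    have hle : g ≤ᵐ[μ] fun ω => Φ ω (y ω) := by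
      filter_upwards [hg_le_Φ] with ω hω using hω (y ω)
    filter_upwards [MeasureTheory.condExp_mono hg_int hyint hle, hyeq] with ω h1 h2
    rw [h2]; exact h1
  -- Z is a.e. bounded
  have hZbdd : ∀ k : ℕ, ∀ᵐ ω ∂μ, |Z k ω| ≤ C := by
    intro k
    obtain ⟨y, hym, hyeq⟩ := hZatt k
    have hyint : Integrable (fun ω => Φ ω (y ω)) μ :=
      hΦcomp_int y (hym.mono (hkle k) le_rfl)
    have h1 : μ[(fun ω => Φ ω (y ω)) | pastSigmaK Xp k] ≤ᵐ[μ]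
        μ[(fun _ => C) | pastSigmaK Xp k] :=
      MeasureTheory.condExp_mono hyint (integrable_const C)
        (ae_of_all _ fun ω => (abs_le.1 (hΦbdd ω (y ω))).2)
    have h2 : μ[(fun _ : Ω => -C) | pastSigmaK Xp k] ≤ᵐ[μ]
        μ[(fun ω => Φ ω (y ω)) | pastSigmaK Xp k] :=
      MeasureTheory.condExp_mono (integrable_const (-C)) hyint
        (ae_of_all _ fun ω => (abs_le.1 (hΦbdd ω (y ω))).1)
    rw [MeasureTheory.condExp_const (hkle k) C (μ := μ)] at h1
    rw [MeasureTheory.condExp_const (hkle k) (-C) (μ := μ)] at h2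
    filter_upwards [hyeq, h1, h2] with ω he hu hl
    rw [he, abs_le]
    exact ⟨hl, hu⟩
  -- Levy's upward theorem for g
  have hlevy : ∀ᵐ ω ∂μ, Tendsto (fun k => (μ[g | pastSigmaK Xp k]) ω) atTop (𝓝 (g ω)) := by
    have hGsm : StronglyMeasurable[⨆ k, ℱ k] G := by
      have : (⨆ k, ℱ k) = pastSigmaAll Xp := hsup
      rw [this]
      exact hGm.stronglyMeasurable
    have hGint : Integrable G μ := hg_int.congr hGae
    have h1 := hGint.tendsto_ae_condExp hGsm
    have h2 : ∀ k : ℕ, μ[G | ℱ k] =ᵐ[μ] μ[g | pastSigmaK Xp k] :=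
      fun k => MeasureTheory.condExp_congr_ae hGae.symm
    have h2' : ∀ᵐ ω ∂μ, ∀ k : ℕ, (μ[G | ℱ k]) ω = (μ[g | pastSigmaK Xp k]) ω :=
      MeasureTheory.ae_all_iff.2 h2
    filter_upwards [h1, h2', hGae] with ω h1ω h2ω h3ω
    rw [h3ω]
    exact Tendsto.congr (fun k => h2ω k) h1ω
  -- upper bound
  have hupper : ∀ ε : ℝ, 0 < ε → ∀ᵐ ω ∂μ, ∀ᶠ k in atTop,
      Z k ω ≤ (μ[g | pastSigmaK Xp k]) ω + 2 * ε := by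
    intro ε hε
    obtain ⟨δ, hδ, hδ'⟩ := hΦmod ε hε
    obtain ⟨t, -, htfin, htcov⟩ := finite_cover_balls_of_compact (isCompact_univ (X := Y)) hδ
    set sY : Finset Y := htfin.toFinset with hsYdef
    set L : List Y := sY.toList with hLdef
    have htcov' : ∀ y : Y, ∃ q ∈ L, dist y q < δ := by
      intro y
      obtain ⟨q, hq, hy⟩ := Set.mem_iUnion₂.1 (htcov (Set.mem_univ y))
      exact ⟨q, Finset.mem_toList.2 (htfin.mem_toFinset.2 hq),
        by simpa [Metric.mem_ball] using hy⟩
    set c : Ω → Y := fun ω => netMap δ L (ystar ω) with hcdef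
    have hcm : Measurable[pastSigmaAll Xp] c := (measurable_netMap _).comp hystarm
    have hcmem : ∀ ω, c ω ∈ sY := fun ω => Finset.mem_toList.1 (netMap_spec _ _ (htcov' _)).1
    have hcdist : ∀ ω, dist (ystar ω) (c ω) < δ := fun ω => (netMap_spec _ _ (htcov' _)).2
    set A : Y → Set Ω := fun p => c ⁻¹' {p} with hAdef
    have hAm : ∀ p, MeasurableSet[pastSigmaAll Xp] (A p) := fun p =>
      hcm (measurableSet_singleton p)
    set ind : Y → Ω → ℝ := fun p => (A p).indicator (fun _ => (1:ℝ)) with hinddef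
    have hind_meas : ∀ p, Measurable[pastSigmaAll Xp] (ind p) := fun p =>
      measurable_const.indicator (hAm p)
    have hind_int : ∀ p, Integrable (ind p) μ := fun p =>
      (integrable_const 1).indicator (hinfle _ (hAm p))
    set cep : ℕ → Y → Ω → ℝ := fun k p => μ[ind p | pastSigmaK Xp k] with hcepdef
    have hlevyall : ∀ᵐ ω ∂μ, ∀ p ∈ sY, Tendsto (fun k => cep k p ω) atTop (𝓝 (ind p ω)) := by
      refine (MeasureTheory.ae_ball_iff sY.countable_toSet).2 fun p _ => ?_
      have hsm : StronglyMeasurable[⨆ k, ℱ k] (ind p) := by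
        rw [(hsup : (⨆ k, ℱ k) = pastSigmaAll Xp)]
        exact (hind_meas p).stronglyMeasurable
      exact (hind_int p).tendsto_ae_condExp hsm
    obtain ⟨p₀, hp₀⟩ : ∃ p, p ∈ L := (htcov' (Classical.arbitrary Y)).imp fun p h => h.1
    set yk : ℕ → Ω → Y := fun k => pickFn p₀ (L.map fun p => (p, cep k p)) with hykdef
    have hykm : ∀ k, Measurable[pastSigmaK Xp k] (yk k) := by
      intro k
      refine measurable_pickFn _ _ ?_
      intro e he
      obtain ⟨p, hp, rfl⟩ := List.mem_map.1 he
      exact stronglyMeasurable_condExp.measurable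
    have hykmem : ∀ k ω, yk k ω ∈ sY := by
      intro k ω
      simp only [hykdef]
      rcases pickFn_mem (d := p₀) (fs := L.map fun p => (p, cep k p)) (ω := ω) with h | ⟨e, he, h⟩
      · rw [h]; exact Finset.mem_toList.1 hp₀
      · obtain ⟨p, hp, rfl⟩ := List.mem_map.1 he
        rw [h]; exact Finset.mem_toList.1 hp
    have hint_p : ∀ p : Y, Integrable (fun ω => Φ ω p) μ := fun p =>
      hΦcomp_int (fun _ => p) measurable_const
    -- the key conditional bound, for each k
    have hkey : ∀ k : ℕ, ∀ᵐ ω ∂μ,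
        Z k ω ≤ (μ[g | pastSigmaK Xp k]) ω + ε + (2*C) * (1 - cep k (yk k ω) ω) := by
      intro k
      have hfib : ∀ p : Y, MeasurableSet[pastSigmaK Xp k] ((yk k) ⁻¹' {p}) := fun p =>
        (hykm k) (measurableSet_singleton p)
      have hind_int2 : ∀ p ∈ sY,
          Integrable (Set.indicator ((yk k) ⁻¹' {p}) (fun ω' => Φ ω' p)) μ := fun p _ =>
        (hint_p p).indicator (hkle k _ (hfib p))
      have hsum : (fun ω => Φ ω (yk k ω)) = fun ω =>
          ∑ p ∈ sY, Set.indicator ((yk k) ⁻¹' {p}) (fun ω' => Φ ω' p) ω := by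
        funext ω
        have hite : ∀ p : Y, Set.indicator ((yk k) ⁻¹' {p}) (fun ω' => Φ ω' p) ω
            = if yk k ω = p then Φ ω p else 0 := by
          intro p
          rw [Set.indicator_apply]
          simp only [Set.mem_preimage, Set.mem_singleton_iff]
        simp only [hite]
        rw [Finset.sum_ite_eq sY (yk k ω) fun p => Φ ω p, if_pos (hykmem k ω)]
      -- conditional expectation of the sum
      have hce1 : μ[(fun ω => Φ ω (yk k ω)) | pastSigmaK Xp k] =ᵐ[μ]
          ∑ p ∈ sY, μ[Set.indicator ((yk k) ⁻¹' {p}) (fun ω' => Φ ω' p) | pastSigmaK Xp k] := by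
        rw [hsum]
        have : (fun ω => ∑ p ∈ sY, Set.indicator ((yk k) ⁻¹' {p}) (fun ω' => Φ ω' p) ω)
            = ∑ p ∈ sY, Set.indicator ((yk k) ⁻¹' {p}) (fun ω' => Φ ω' p) := by
          funext ω; rw [Finset.sum_apply]
        rw [this]
        exact MeasureTheory.condExp_finset_sum hind_int2 _
      have hce2 : ∀ᵐ ω ∂μ, ∀ p ∈ sY,
          (μ[Set.indicator ((yk k) ⁻¹' {p}) (fun ω' => Φ ω' p) | pastSigmaK Xp k]) ω
            = Set.indicator ((yk k) ⁻¹' {p}) (μ[(fun ω' => Φ ω' p) | pastSigmaK Xp k]) ω := by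
        refine (MeasureTheory.ae_ball_iff sY.countable_toSet).2 fun p _ => ?_
        exact MeasureTheory.condExp_indicator (hint_p p) (hfib p)
      -- the per-point bound
      have hbp : ∀ p ∈ sY, μ[(fun ω' => Φ ω' p) | pastSigmaK Xp k] ≤ᵐ[μ]
          fun ω => (μ[g | pastSigmaK Xp k]) ω + ε + (2*C) * (1 - cep k p ω) := by
        intro p _
        have hbp_int : Integrable (fun ω => g ω + (ε + 2*C) - (2*C) * ind p ω) μ :=
          (hg_int.add (integrable_const (ε + 2*C))).sub ((hind_int p).const_mul (2*C))
        have hptle : (fun ω => Φ ω p) ≤ᵐ[μ]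
            fun ω => g ω + (ε + 2*C) - (2*C) * ind p ω := by
          filter_upwards [hgsup] with ω hω
          by_cases hA : ω ∈ A p
          · have hpc : c ω = p := hA
            have : dist p (ystar ω) < δ := by
              rw [← hpc, dist_comm]; exact hcdist ω
            have h1 := (abs_le.1 (hδ' _ _ this ω)).2
            have h2 : ind p ω = 1 := by
              rw [hinddef]; exact Set.indicator_of_mem hA _
            rw [h2]; rw [hω] at h1; ring_nf; ring_nf at h1; linarith
          · have h2 : ind p ω = 0 := by
              rw [hinddef]; exact Set.indicator_of_notMem hA _
            have h3 := (abs_le.1 (hΦbdd ω p)).2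
            have h4 := (abs_le.1 (hgbdd ω)).1
            rw [h2]; linarith
        have hmono1 := MeasureTheory.condExp_mono (m := pastSigmaK Xp k) (hint_p p) hbp_int hptle
        -- expand the conditional expectation of the bound
        have e1 : μ[(fun ω => g ω + (ε + 2*C) - (2*C) * ind p ω) | pastSigmaK Xp k] =ᵐ[μ]
            μ[(fun ω => g ω + (ε + 2*C)) | pastSigmaK Xp k]
              - μ[(fun ω => (2*C) * ind p ω) | pastSigmaK Xp k] :=
          MeasureTheory.condExp_sub (hg_int.add (integrable_const (ε + 2*C)))
            ((hind_int p).const_mul (2*C)) _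
        have e2 : μ[(fun ω => g ω + (ε + 2*C)) | pastSigmaK Xp k] =ᵐ[μ]
            μ[g | pastSigmaK Xp k] + μ[(fun _ => ε + 2*C) | pastSigmaK Xp k] :=
          MeasureTheory.condExp_add hg_int (integrable_const (ε + 2*C)) _
        have e3 : μ[(fun ω => (2*C) * ind p ω) | pastSigmaK Xp k] =ᵐ[μ]
            (2*C) • μ[ind p | pastSigmaK Xp k] :=
          MeasureTheory.condExp_smul (2*C) (ind p) _
        have e4 := MeasureTheory.condExp_const (hkle k) (ε + 2*C) (μ := μ)
        filter_upwards [hmono1, e1, e2, e3] with ω hm1 he1 he2 he3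
        have : (μ[(fun ω => g ω + (ε + 2*C) - (2*C) * ind p ω) | pastSigmaK Xp k]) ω
            = (μ[g | pastSigmaK Xp k]) ω + (ε + 2*C) - (2*C) * cep k p ω := by
          rw [he1]
          simp only [Pi.sub_apply, Pi.add_apply]
          rw [he2, he3]
          simp only [Pi.add_apply, Pi.smul_apply, smul_eq_mul, e4]
          rfl
        rw [this] at hm1
        calc (μ[(fun ω' => Φ ω' p) | pastSigmaK Xp k]) ω
            ≤ (μ[g | pastSigmaK Xp k]) ω + (ε + 2*C) - (2*C) * cep k p ω := hm1
        _ = (μ[g | pastSigmaK Xp k]) ω + ε + (2*C) * (1 - cep k p ω) := by ring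
      have hbpall : ∀ᵐ ω ∂μ, ∀ p ∈ sY,
          (μ[(fun ω' => Φ ω' p) | pastSigmaK Xp k]) ω
            ≤ (μ[g | pastSigmaK Xp k]) ω + ε + (2*C) * (1 - cep k p ω) :=
        (MeasureTheory.ae_ball_iff sY.countable_toSet).2 fun p hp => hbp p hp
      -- put everything together
      filter_upwards [hZle k (yk k) (hykm k), hce1, hce2, hbpall] with ω h1 h2 h3 h4
      calc Z k ω ≤ (μ[(fun ω' => Φ ω' (yk k ω')) | pastSigmaK Xp k]) ω := h1
      _ = ∑ p ∈ sY, (μ[Set.indicator ((yk k) ⁻¹' {p}) (fun ω' => Φ ω' p)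
            | pastSigmaK Xp k]) ω := by rw [h2]; rw [Finset.sum_apply]
      _ = ∑ p ∈ sY, Set.indicator ((yk k) ⁻¹' {p})
            (μ[(fun ω' => Φ ω' p) | pastSigmaK Xp k]) ω :=
          Finset.sum_congr rfl fun p hp => h3 p hp
      _ ≤ ∑ p ∈ sY, (if yk k ω = p then
            (μ[g | pastSigmaK Xp k]) ω + ε + (2*C) * (1 - cep k p ω) else 0) := by
          refine Finset.sum_le_sum fun p hp => ?_
          rw [Set.indicator_apply]
          simp only [Set.mem_preimage, Set.mem_singleton_iff]
          by_cases hyp : yk k ω = p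
          · rw [if_pos hyp, if_pos hyp]; exact h4 p hp
          · rw [if_neg hyp, if_neg hyp]
      _ = (μ[g | pastSigmaK Xp k]) ω + ε + (2*C) * (1 - cep k (yk k ω) ω) := by
          rw [Finset.sum_ite_eq sY (yk k ω), if_pos (hykmem k ω)]
    -- pass to the limit in k
    filter_upwards [hlevyall, MeasureTheory.ae_all_iff.2 hkey] with ω hlev hb
    have hps : c ω ∈ sY := hcmem ω
    have hind1 : ind (c ω) ω = 1 := by
      rw [hinddef]
      exact Set.indicator_of_mem (by exact rfl) _
    have htend1 : Tendsto (fun k => cep k (c ω) ω) atTop (𝓝 1) := by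
      have := hlev (c ω) hps; rwa [hind1] at this
    have hev1 : ∀ᶠ k in atTop, 1/2 < cep k (c ω) ω :=
      htend1.eventually (lt_mem_nhds (by norm_num : (1:ℝ)/2 < 1))
    have hev2 : ∀ᶠ k in atTop, ∀ p ∈ (sY : Set Y), p ≠ c ω → ¬ (1/2 < cep k p ω) := by
      rw [eventually_all_finite sY.finite_toSet]
      intro p hp
      rw [Finset.mem_coe] at hp
      by_cases hpc : p = c ω
      · exact Eventually.of_forall fun k h => absurd hpc h
      · have hind0 : ind p ω = 0 := by
          rw [hinddef]
          refine Set.indicator_of_notMem ?_ _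
          simp only [hAdef, Set.mem_preimage, Set.mem_singleton_iff]
          exact fun h => hpc (by rw [← h])
        have := hlev p hp; rw [hind0] at this
        filter_upwards [this.eventually (gt_mem_nhds (by norm_num : (0:ℝ) < 1/2))]
          with k hk _ using not_lt.2 hk.le
    have hev3 : ∀ᶠ k in atTop, (2*C) * (1 - cep k (c ω) ω) ≤ ε := by
      have hpos : (0:ℝ) < 1 - (1 - ε / (2*C+1)) := by
        have : 0 < ε / (2*C+1) := by positivity
        linarith
      have := htend1.eventually (lt_mem_nhds (by linarith : 1 - ε / (2*C+1) < 1))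
      filter_upwards [this] with k hk
      have h1 : 1 - cep k (c ω) ω < ε / (2*C+1) := by linarith
      have h2 : (2*C) * (1 - cep k (c ω) ω) ≤ (2*C) * (ε / (2*C+1)) :=
        mul_le_mul_of_nonneg_left h1.le (by positivity)
      have h3 : (2*C) * (ε / (2*C+1)) ≤ ε := by
        rw [mul_div_assoc']
        rw [div_le_iff₀ (by positivity)]
        nlinarith
      linarith
    filter_upwards [hev1, hev2, hev3] with k h1 h2 h3
    have hykeq : yk k ω = c ω := by
      refine pickFn_eq ⟨cep k (c ω), List.mem_map.2 ⟨c ω, Finset.mem_toList.2 hps, rfl⟩, h1⟩ ?_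
      intro e he hne
      obtain ⟨p, hp, rfl⟩ := List.mem_map.1 he
      exact h2 p (Finset.mem_coe.2 (Finset.mem_toList.1 hp)) hne
    have := hb k
    rw [hykeq] at this
    linarith
  -- final assembly
  have hupper' : ∀ᵐ ω ∂μ, ∀ n : ℕ, ∀ᶠ k in atTop,
      Z k ω ≤ (μ[g | pastSigmaK Xp k]) ω + 2 * (1 / ((n:ℝ)+1)) :=
    MeasureTheory.ae_all_iff.2 fun n => hupper _ (by positivity)
  have hlow' : ∀ᵐ ω ∂μ, ∀ k, (μ[g | pastSigmaK Xp k]) ω ≤ Z k ω :=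
    MeasureTheory.ae_all_iff.2 fun k => hlower k
  refine ⟨C, hCnn, hg_aesm, hgbdd, hZbdd, ?_⟩
  filter_upwards [hupper', hlow', hlevy] with ω hu hl ht
  rw [Metric.tendsto_atTop]
  intro ε hε
  obtain ⟨n, hn⟩ : ∃ n : ℕ, 1 / ((n:ℝ)+1) < ε/4 := exists_nat_one_div_lt (by linarith)
  have h1 : ∀ᶠ k in atTop, dist ((μ[g | pastSigmaK Xp k]) ω) (g ω) < ε/2 := by
    obtain ⟨N, hN⟩ := Metric.tendsto_atTop.1 ht (ε/2) (by linarith)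
    exact eventually_atTop.2 ⟨N, hN⟩
  obtain ⟨N, hN⟩ := eventually_atTop.1 (h1.and (hu n))
  refine ⟨N, fun k hk => ?_⟩
  obtain ⟨hd, hb2⟩ := hN k hk
  rw [Real.dist_eq] at hd ⊢
  rw [abs_lt] at hd
  rw [abs_lt]
  constructor
  · have := hl k; linarith
  · linarith

end Master


private lemma real_iSup_neg {ι : Sort*} (f : ι → ℝ) : (⨆ i, -(f i)) = -(⨅ i, f i) := by
  rw [iInf, Real.sInf_def, neg_neg, iSup]
  congr 1
  ext x
  simp only [Set.mem_range, Set.mem_neg]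
  constructor
  · rintro ⟨i, hi⟩; exact ⟨i, by linarith⟩
  · rintro ⟨i, hi⟩; exact ⟨i, by linarith⟩


theorem stmt10 {Ω X Y Λ : Type*}
    [MeasurableSpace Ω] (μ : Measure Ω) [IsProbabilityMeasure μ]
    [MetricSpace X] [CompactSpace X] [MeasurableSpace X] [BorelSpace X]
    [MetricSpace Y] [CompactSpace Y] [Nonempty Y] [MeasurableSpace Y] [BorelSpace Y]
    [MetricSpace Λ] [CompactSpace Λ] [Nonempty Λ] [MeasurableSpace Λ] [BorelSpace Λ]
    (T : Ω → Ω) (hT : Ergodic T μ)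
    (Xp : ℤ → Ω → X) (hXm : ∀ i, Measurable (Xp i))
    (hshift : ∀ i ω, Xp (i + 1) ω = Xp i (T ω))
    (l : Y → Λ → X → ℝ)
    (hl : Continuous fun p : Y × Λ × X => l p.1 p.2.1 p.2.2)
    (Pinf : Ω → ProbabilityMeasure X)
    (hPinf : ∀ f : X → ℝ, Continuous f →
      (fun ω => ∫ x, f x ∂(Pinf ω : Measure X))
        =ᵐ[μ] μ[(fun ω => f (Xp 0 ω)) | pastSigmaAll Xp])
    -- the conditional minimax values `Z_k`
    (Z : ℕ → Ω → ℝ)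
    (hZmeas : ∀ k, Measurable[pastSigmaK Xp k] (Z k))
    (hZle : ∀ k, ∀ y : Ω → Y, Measurable[pastSigmaK Xp k] y →
      Z k ≤ᵐ[μ] μ[(fun ω => ⨆ lam : Λ, ∫ x, l (y ω) lam x ∂(Pinf ω : Measure X))
        | pastSigmaK Xp k])
    (hZatt : ∀ k, ∃ y : Ω → Y, Measurable[pastSigmaK Xp k] y ∧
      Z k =ᵐ[μ] μ[(fun ω => ⨆ lam : Λ, ∫ x, l (y ω) lam x ∂(Pinf ω : Measure X))
        | pastSigmaK Xp k])
    -- the conditional maximin values `Z'_k`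
    (Z' : ℕ → Ω → ℝ)
    (hZ'meas : ∀ k, Measurable[pastSigmaK Xp k] (Z' k))
    (hZ'ge : ∀ k, ∀ lamf : Ω → Λ, Measurable[pastSigmaK Xp k] lamf →
      μ[(fun ω => ⨅ y : Y, ∫ x, l y (lamf ω) x ∂(Pinf ω : Measure X))
        | pastSigmaK Xp k] ≤ᵐ[μ] Z' k)
    (hZ'att : ∀ k, ∃ lamf : Ω → Λ, Measurable[pastSigmaK Xp k] lamf ∧
      Z' k =ᵐ[μ] μ[(fun ω => ⨅ y : Y, ∫ x, l y (lamf ω) x ∂(Pinf ω : Measure X))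
        | pastSigmaK Xp k])
    -- the `F₋∞`-measurable saddle point `(y*∞, λ*∞)`
    (ystar : Ω → Y) (lamstar : Ω → Λ)
    (hystarm : Measurable[pastSigmaAll Xp] ystar)
    (hlamstarm : Measurable[pastSigmaAll Xp] lamstar)
    (hsaddle : ∀ᵐ ω ∂μ, ∀ (y : Y) (lam : Λ),
      (∫ x, l (ystar ω) lam x ∂(Pinf ω : Measure X))
          ≤ (∫ x, l (ystar ω) (lamstar ω) x ∂(Pinf ω : Measure X)) ∧
        (∫ x, l (ystar ω) (lamstar ω) x ∂(Pinf ω : Measure X))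
          ≤ ∫ x, l y (lamstar ω) x ∂(Pinf ω : Measure X)) :
    (∀ᵐ ω ∂μ, Tendsto (fun k => Z k ω) atTop
        (𝓝 (∫ x, l (ystar ω) (lamstar ω) x ∂(Pinf ω : Measure X)))) ∧
    (∀ᵐ ω ∂μ, Tendsto (fun k => Z' k ω) atTop
        (𝓝 (∫ x, l (ystar ω) (lamstar ω) x ∂(Pinf ω : Measure X)))) ∧
    Tendsto (fun k => ∫ ω, |Z k ω
        - ∫ x, l (ystar ω) (lamstar ω) x ∂(Pinf ω : Measure X)| ∂μ) atTop (𝓝 0) ∧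
    Tendsto (fun k => ∫ ω, |Z' k ω
        - ∫ x, l (ystar ω) (lamstar ω) x ∂(Pinf ω : Measure X)| ∂μ) atTop (𝓝 0) ∧
    Tendsto (fun k => ∫ ω, Z k ω ∂μ) atTop
      (𝓝 (∫ ω, (∫ x, l (ystar ω) (lamstar ω) x ∂(Pinf ω : Measure X)) ∂μ)) ∧
    Tendsto (fun k => ∫ ω, Z' k ω ∂μ) atTop
      (𝓝 (∫ ω, (∫ x, l (ystar ω) (lamstar ω) x ∂(Pinf ω : Measure X)) ∂μ)) := by
    classical
  set g : Ω → ℝ := fun ω => ∫ x, l (ystar ω) (lamstar ω) x ∂(Pinf ω : Measure X) with hgdef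
  have hkle : ∀ k, pastSigmaK Xp k ≤ ‹MeasurableSpace Ω› := fun k =>
    iSup_le fun i => (hXm i.1).comap_le
  -- apply the master lemma to `Z`
  obtain ⟨C₁, hC₁, hg_aesm, hgbdd, hZbdd, hZtend⟩ :=
    master_tendsto μ Xp hXm l hl Pinf hPinf Z hZle hZatt ystar lamstar hystarm hlamstarm hsaddle
  -- apply the master lemma to `-Z'` with the roles of `Y` and `Λ` swapped
  set l' : Λ → Y → X → ℝ := fun lam y x => -(l y lam x) with hl'def
  have hl' : Continuous fun p : Λ × Y × X => l' p.1 p.2.1 p.2.2 :=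
    (hl.comp ((continuous_snd.fst).prodMk
      ((continuous_fst).prodMk continuous_snd.snd))).neg
  have hswap : ∀ (yf : Ω → Λ),
      (fun ω => ⨆ lam : Y, ∫ x, l' (yf ω) lam x ∂(Pinf ω : Measure X))
        = fun ω => -(⨅ y : Y, ∫ x, l y (yf ω) x ∂(Pinf ω : Measure X)) := by
    intro yf
    funext ω
    rw [← real_iSup_neg (fun y : Y => ∫ x, l y (yf ω) x ∂(Pinf ω : Measure X))]
    congr 1
    funext y
    exact integral_neg _
  have hZ''le : ∀ k, ∀ yf : Ω → Λ, Measurable[pastSigmaK Xp k] yf →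
      (fun ω => -(Z' k ω)) ≤ᵐ[μ]
        μ[(fun ω => ⨆ lam : Y, ∫ x, l' (yf ω) lam x ∂(Pinf ω : Measure X))
          | pastSigmaK Xp k] := by
    intro k yf hyf
    have h := hZ'ge k yf hyf
    have hc : μ[(fun ω => ⨆ lam : Y, ∫ x, l' (yf ω) lam x ∂(Pinf ω : Measure X))
          | pastSigmaK Xp k] =ᵐ[μ]
        -μ[(fun ω => ⨅ y : Y, ∫ x, l y (yf ω) x ∂(Pinf ω : Measure X))
          | pastSigmaK Xp k] := by
      rw [hswap yf]
      exact condExp_neg _ _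
    filter_upwards [h, hc] with ω h1 h2
    rw [h2]
    simp only [Pi.neg_apply]
    linarith
  have hZ''att : ∀ k, ∃ yf : Ω → Λ, Measurable[pastSigmaK Xp k] yf ∧
      (fun ω => -(Z' k ω)) =ᵐ[μ]
        μ[(fun ω => ⨆ lam : Y, ∫ x, l' (yf ω) lam x ∂(Pinf ω : Measure X))
          | pastSigmaK Xp k] := by
    intro k
    obtain ⟨yf, hyf, heq⟩ := hZ'att k
    refine ⟨yf, hyf, ?_⟩
    have hc : μ[(fun ω => ⨆ lam : Y, ∫ x, l' (yf ω) lam x ∂(Pinf ω : Measure X))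
          | pastSigmaK Xp k] =ᵐ[μ]
        -μ[(fun ω => ⨅ y : Y, ∫ x, l y (yf ω) x ∂(Pinf ω : Measure X))
          | pastSigmaK Xp k] := by
      rw [hswap yf]
      exact condExp_neg _ _
    filter_upwards [heq, hc] with ω h1 h2
    rw [h2]
    simp only [Pi.neg_apply]
    rw [h1]
  have hsaddle' : ∀ᵐ ω ∂μ, ∀ (y : Λ) (lam : Y),
      (∫ x, l' (lamstar ω) lam x ∂(Pinf ω : Measure X))
          ≤ (∫ x, l' (lamstar ω) (ystar ω) x ∂(Pinf ω : Measure X)) ∧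
        (∫ x, l' (lamstar ω) (ystar ω) x ∂(Pinf ω : Measure X))
          ≤ ∫ x, l' y (ystar ω) x ∂(Pinf ω : Measure X) := by
    filter_upwards [hsaddle] with ω hω
    intro lam0 y0
    have e1 : ∀ (y : Y) (lam : Λ), (∫ x, l' lam y x ∂(Pinf ω : Measure X))
        = -(∫ x, l y lam x ∂(Pinf ω : Measure X)) := fun y lam => integral_neg _
    rw [e1, e1, e1]
    constructor
    · have := (hω y0 (lamstar ω)).2
      linarith
    · have := (hω (ystar ω) lam0).1
      linarith
  obtain ⟨C₂, hC₂, hg'_aesm, hg'bdd, hZ'bdd, hZ'tend⟩ :=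
    master_tendsto μ Xp hXm l' hl' Pinf hPinf (fun k ω => -(Z' k ω)) hZ''le hZ''att
      lamstar ystar hlamstarm hystarm hsaddle'
  -- translate the `Z'` conclusion back
  have hg'eq : ∀ ω, (∫ x, l' (lamstar ω) (ystar ω) x ∂(Pinf ω : Measure X)) = -(g ω) :=
    fun ω => integral_neg _
  have hZ'tend2 : ∀ᵐ ω ∂μ, Tendsto (fun k => Z' k ω) atTop (𝓝 (g ω)) := by
    filter_upwards [hZ'tend] with ω hω
    rw [hg'eq ω] at hω
    have := hω.neg
    simpa using this
  have hZ'bdd2 : ∀ k, ∀ᵐ ω ∂μ, |Z' k ω| ≤ C₂ := by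
    intro k
    filter_upwards [hZ'bdd k] with ω hω
    rwa [abs_neg] at hω
  -- a.e. bounds for all k simultaneously
  have hZbddall : ∀ᵐ ω ∂μ, ∀ k, |Z k ω| ≤ C₁ := ae_all_iff.2 hZbdd
  have hZ'bddall : ∀ᵐ ω ∂μ, ∀ k, |Z' k ω| ≤ C₂ := ae_all_iff.2 hZ'bdd2
  -- strong measurability
  have hZaesm : ∀ k, AEStronglyMeasurable (Z k) μ := fun k =>
    ((hZmeas k).mono (hkle k) le_rfl).aestronglyMeasurable
  have hZ'aesm : ∀ k, AEStronglyMeasurable (Z' k) μ := fun k =>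
    ((hZ'meas k).mono (hkle k) le_rfl).aestronglyMeasurable
  -- L¹ convergence via dominated convergence
  have hL1 : ∀ (W : ℕ → Ω → ℝ) (CW : ℝ), (∀ k, AEStronglyMeasurable (W k) μ) →
      (∀ᵐ ω ∂μ, ∀ k, |W k ω| ≤ CW) →
      (∀ᵐ ω ∂μ, Tendsto (fun k => W k ω) atTop (𝓝 (g ω))) →
      Tendsto (fun k => ∫ ω, |W k ω - g ω| ∂μ) atTop (𝓝 0) ∧
      Tendsto (fun k => ∫ ω, W k ω ∂μ) atTop (𝓝 (∫ ω, g ω ∂μ)) := by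
    intro W CW hWm hWb hWt
    constructor
    · have h0 : (0:ℝ) = ∫ (_ : Ω), (0:ℝ) ∂μ := by simp
      rw [h0]
      refine tendsto_integral_of_dominated_convergence (fun _ => CW + C₁) ?_ ?_ ?_ ?_
      · intro k
        exact ((hWm k).sub hg_aesm).norm.congr
          (ae_of_all _ fun ω => Real.norm_eq_abs _)
      · exact integrable_const _
      · intro k
        filter_upwards [hWb] with ω hω
        rw [Real.norm_eq_abs, abs_abs]
        calc |W k ω - g ω| ≤ |W k ω| + |g ω| := abs_sub _ _
        _ ≤ CW + C₁ := add_le_add (hω k) (hgbdd ω)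
      · filter_upwards [hWt] with ω hω
        have := (hω.sub_const (g ω)).abs
        simpa using this
    · refine tendsto_integral_of_dominated_convergence (fun _ => CW) hWm
        (integrable_const _) ?_ hWt
      intro k
      filter_upwards [hWb] with ω hω
      rw [Real.norm_eq_abs]
      exact hω k
  obtain ⟨hA, hB⟩ := hL1 Z C₁ hZaesm hZbddall hZtend
  obtain ⟨hA', hB'⟩ := hL1 Z' C₂ hZ'aesm hZ'bddall hZ'tend2
  exact ⟨hZtend, hZ'tend2, hA, hA', hB, hB'⟩
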